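/- Let p, q be distinct primes with ord_p(q) = p − 1. If q > max_{A,B} |m_{A,B}·p − ∏_{i<j}(a_j − a_i)/∏_{i<j}(j − i)|, the maximum over all pairs of subsets A, B ⊆ {0,...,p−1} of equal size, then all minors of the Fourier matrix F_p over 𝔽_{q^{p−1}} are nonzero. -/

import Mathlib

open MvPolynomial


lemma myprod_pairs {M : Type*} [CommMonoid M] {k : ℕ} (f : Fin k → Fin k → M) :
    ∏ w ∈ Finset.univ.filter (fun w : Fin k × Fin k => w.1 < w.2), f w.1 w.2
      = ∏ i, ∏ j ∈ Finset.Ioi i, f i j := by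
  rw [Finset.prod_sigma']
  refine Finset.prod_nbij' (fun w => ⟨w.1, w.2⟩) (fun w => (w.1, w.2)) ?_ ?_ ?_ ?_ ?_ <;>
    simp [Finset.mem_filter, Finset.mem_sigma, Finset.mem_Ioi]

lemma myprime_X_sub_X {σ : Type*} [DecidableEq σ] {i j : σ} (h : i ≠ j) :
    Prime (MvPolynomial.X j - MvPolynomial.X i : MvPolynomial σ ℤ) := by
  let E : MvPolynomial σ ℤ ≃+* Polynomial (MvPolynomial {l : σ // l ≠ j} ℤ) :=
    ((renameEquiv ℤ (Equiv.optionSubtypeNe j).symm).trans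
      (optionEquivLeft ℤ {l : σ // l ≠ j})).toRingEquiv
  rw [← MulEquiv.prime_iff E.toMulEquiv]
  have hE : E (MvPolynomial.X j - MvPolynomial.X i)
      = Polynomial.X - Polynomial.C (MvPolynomial.X ⟨i, h⟩) := by
    have h1 : E (MvPolynomial.X j) = Polynomial.X := by
      simp [E, Equiv.optionSubtypeNe_symm_self, optionEquivLeft_X_none]
    have h2 : E (MvPolynomial.X i) = Polynomial.C (MvPolynomial.X ⟨i, h⟩) := by
      simp [E, Equiv.optionSubtypeNe_symm_of_ne h, optionEquivLeft_X_some]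
    rw [map_sub, h1, h2]
  rw [show E.toMulEquiv (MvPolynomial.X j - MvPolynomial.X i) = E (MvPolynomial.X j - MvPolynomial.X i) from rfl, hE]
  exact Polynomial.prime_X_sub_C _

lemma mydvd_sub_subst {σ : Type*} [DecidableEq σ] (i j : σ) (f : MvPolynomial σ ℤ) :
    (MvPolynomial.X j - MvPolynomial.X i) ∣
      f - aeval (R := ℤ) (fun l => if l = i then (MvPolynomial.X j : MvPolynomial σ ℤ)
        else MvPolynomial.X l) f := by
  set g := aeval (R := ℤ) (fun l => if l = i then (MvPolynomial.X j : MvPolynomial σ ℤ)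
        else MvPolynomial.X l) with hg
  induction f using MvPolynomial.induction_on with
  | C a => simp [g]
  | add f₁ f₂ h1 h2 =>
      have : f₁ + f₂ - g (f₁ + f₂) = (f₁ - g f₁) + (f₂ - g f₂) := by rw [map_add]; ring
      rw [this]; exact dvd_add h1 h2
  | mul_X f n h =>
      have hgx : g (MvPolynomial.X n) = if n = i then MvPolynomial.X j else MvPolynomial.X n := by
        simp [g]
      have : f * MvPolynomial.X n - g (f * MvPolynomial.X n)
          = (f - g f) * MvPolynomial.X n + g f * (MvPolynomial.X n - g (MvPolynomial.X n)) := by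
        rw [map_mul]; ring
      rw [this]
      refine dvd_add (dvd_mul_of_dvd_left h _) (dvd_mul_of_dvd_right ?_ (g f))
      rw [hgx]
      by_cases hn : n = i
      · simp only [hn, if_pos rfl]
        exact dvd_sub_comm.mp dvd_rfl
      · simp [hn]

lemma myprod_dvd_of_primes {ι R : Type*} [CommMonoidWithZero R] [IsCancelMulZero R] (s : Finset ι) (f : ι → R)
    (hp : ∀ i ∈ s, Prime (f i))
    (hnd : ∀ i ∈ s, ∀ j ∈ s, i ≠ j → ¬ f i ∣ f j) :
    ∀ n : R, (∀ i ∈ s, f i ∣ n) → ∏ i ∈ s, f i ∣ n := by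
  classical
  induction s using Finset.induction_on with
  | empty => simp
  | @insert a s ha ih =>
      intro n hd
      obtain ⟨c, rfl⟩ := hd a (Finset.mem_insert_self a s)
      rw [Finset.prod_insert ha]
      refine mul_dvd_mul_left _ (ih (fun i hi => hp i (Finset.mem_insert_of_mem hi))
        (fun i hi j hj hij => hnd i (Finset.mem_insert_of_mem hi) j (Finset.mem_insert_of_mem hj) hij)
        c (fun i hi => ?_))
      have hia : i ≠ a := by rintro rfl; exact ha hi
      have hpi := hp i (Finset.mem_insert_of_mem hi)
      rcases hpi.dvd_or_dvd (hd i (Finset.mem_insert_of_mem hi)) with h | h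
      · exact absurd h (hnd i (Finset.mem_insert_of_mem hi) a (Finset.mem_insert_self a s) hia)
      · exact h

lemma myexists_schur {k : ℕ} (a : Fin k → ℕ) :
    ∃ s : MvPolynomial (Fin k) ℤ,
      Matrix.det (fun i j : Fin k => (MvPolynomial.X j : MvPolynomial (Fin k) ℤ) ^ a i)
        = (∏ w ∈ Finset.univ.filter (fun w : Fin k × Fin k => w.1 < w.2),
            (MvPolynomial.X w.2 - MvPolynomial.X w.1)) * s := by
  suffices h : (∏ w ∈ Finset.univ.filter (fun w : Fin k × Fin k => w.1 < w.2),
      (MvPolynomial.X w.2 - MvPolynomial.X w.1 : MvPolynomial (Fin k) ℤ)) ∣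
      Matrix.det (fun i j : Fin k => (MvPolynomial.X j : MvPolynomial (Fin k) ℤ) ^ a i) by
    obtain ⟨s, hs⟩ := h; exact ⟨s, hs⟩
  apply myprod_dvd_of_primes _ (fun w : Fin k × Fin k => MvPolynomial.X w.2 - MvPolynomial.X w.1)
  · intro w hw
    exact myprime_X_sub_X (Finset.mem_filter.mp hw).2.ne
  · intro w hw w' hw' hne hdvd
    have hw2 : w.1 < w.2 := (Finset.mem_filter.mp hw).2
    have hw'2 : w'.1 < w'.2 := (Finset.mem_filter.mp hw').2
    set ρ := aeval (R := ℤ) (fun r : Fin k => if r = w.1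
      then (MvPolynomial.X w.2 : MvPolynomial (Fin k) ℤ) else MvPolynomial.X r) with hρ
    have h0 : ρ (MvPolynomial.X w.2 - MvPolynomial.X w.1) = 0 := by
      by_cases h : w.2 = w.1 <;> simp [ρ, h]
    have h1 := map_dvd ρ hdvd
    rw [h0, zero_dvd_iff, map_sub, aeval_X, aeval_X] at h1
    by_cases h2 : w'.2 = w.1
    · by_cases h3 : w'.1 = w.1
      · exact absurd (h2.trans h3.symm) hw'2.ne'
      · rw [if_pos h2, if_neg h3, sub_eq_zero] at h1
        have h4 := X_injective h1
        rw [h2] at hw'2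
        rw [← h4] at hw'2
        exact absurd (hw2.trans hw'2) (lt_irrefl _)
    · by_cases h3 : w'.1 = w.1
      · rw [if_neg h2, if_pos h3, sub_eq_zero] at h1
        exact hne (Prod.ext h3 (X_injective h1)).symm
      · rw [if_neg h2, if_neg h3, sub_eq_zero] at h1
        exact absurd (X_injective h1) hw'2.ne'
  · intro w hw
    have hlt : w.1 < w.2 := (Finset.mem_filter.mp hw).2
    have hsub := mydvd_sub_subst w.1 w.2
      (Matrix.det (fun i j : Fin k => (MvPolynomial.X j : MvPolynomial (Fin k) ℤ) ^ a i))
    set ρ := aeval (R := ℤ) (fun l : Fin k => if l = w.1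
      then (MvPolynomial.X w.2 : MvPolynomial (Fin k) ℤ) else MvPolynomial.X l) with hρ
    have hdet0 : ρ (Matrix.det (fun i j : Fin k => (MvPolynomial.X j : MvPolynomial (Fin k) ℤ) ^ a i)) = 0 := by
      rw [show (fun i j : Fin k => (MvPolynomial.X j : MvPolynomial (Fin k) ℤ) ^ a i)
          = Matrix.of (fun i j : Fin k => (MvPolynomial.X j : MvPolynomial (Fin k) ℤ) ^ a i) from rfl,
        AlgHom.map_det ρ]
      apply Matrix.det_zero_of_column_eq hlt.ne
      intro r
      show ρ ((MvPolynomial.X w.1 : MvPolynomial (Fin k) ℤ) ^ a r)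
          = ρ ((MvPolynomial.X w.2 : MvPolynomial (Fin k) ℤ) ^ a r)
      simp [ρ, hlt.ne']
    simpa [hdet0] using hsub
lemma myschur_ones {k : ℕ} (a : Fin k → ℕ) (s : MvPolynomial (Fin k) ℤ)
    (hs : Matrix.det (fun i j : Fin k => (MvPolynomial.X j : MvPolynomial (Fin k) ℤ) ^ a i)
      = (∏ w ∈ Finset.univ.filter (fun w : Fin k × Fin k => w.1 < w.2),
          (MvPolynomial.X w.2 - MvPolynomial.X w.1)) * s) :
    (aeval (fun _ : Fin k => (1:ℤ)) s) *
      (∏ w ∈ Finset.univ.filter (fun w : Fin k × Fin k => w.1 < w.2),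
        ((w.2 : ℤ) - (w.1 : ℤ)))
    = ∏ w ∈ Finset.univ.filter (fun w : Fin k × Fin k => w.1 < w.2),
        ((a w.2 : ℤ) - (a w.1 : ℤ)) := by
  classical
  set Pr := Finset.univ.filter (fun w : Fin k × Fin k => w.1 < w.2) with hPr
  set ψ := aeval (R := ℤ) (fun j : Fin k => (Polynomial.X : Polynomial ℤ) ^ (j : ℕ)) with hψ
  have h1 : ψ (Matrix.det (fun i j : Fin k => (MvPolynomial.X j : MvPolynomial (Fin k) ℤ) ^ a i))
      = ∏ w ∈ Pr, ((Polynomial.X : Polynomial ℤ) ^ (a w.2) - Polynomial.X ^ (a w.1)) := by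
    rw [show (fun i j : Fin k => (MvPolynomial.X j : MvPolynomial (Fin k) ℤ) ^ a i)
        = Matrix.of (fun i j : Fin k => (MvPolynomial.X j : MvPolynomial (Fin k) ℤ) ^ a i) from rfl,
      AlgHom.map_det ψ, AlgHom.mapMatrix_apply]
    have hmat : (Matrix.of fun i j : Fin k =>
          (MvPolynomial.X j : MvPolynomial (Fin k) ℤ) ^ a i).map ψ
        = Matrix.vandermonde (fun i => (Polynomial.X : Polynomial ℤ) ^ (a i)) := by
      apply Matrix.ext
      intro i j
      show ψ ((MvPolynomial.X j : MvPolynomial (Fin k) ℤ) ^ a i) = _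
      rw [map_pow]
      simp only [ψ, aeval_X]
      rw [Matrix.vandermonde, Matrix.of_apply, ← pow_mul, ← pow_mul, mul_comm]
    rw [hmat, Matrix.det_vandermonde,
      ← myprod_pairs (fun i j => (Polynomial.X : Polynomial ℤ) ^ (a j) - Polynomial.X ^ (a i))]
  have h2 : ψ (∏ w ∈ Pr, (MvPolynomial.X w.2 - MvPolynomial.X w.1))
      = ∏ w ∈ Pr, ((Polynomial.X : Polynomial ℤ) ^ ((w.2 : Fin k) : ℕ)
          - Polynomial.X ^ ((w.1 : Fin k) : ℕ)) := by
    rw [map_prod]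
    exact Finset.prod_congr rfl (fun w hw => by simp [ψ])
  set G : ℕ → ℕ → Polynomial ℤ := fun n m =>
    (∑ l ∈ Finset.range m, Polynomial.X ^ l) - ∑ l ∈ Finset.range n, Polynomial.X ^ l with hGdef
  have hG : ∀ n m : ℕ, (Polynomial.X - 1) * G n m = Polynomial.X ^ m - Polynomial.X ^ n := by
    intro n m
    rw [hGdef]
    rw [mul_sub, mul_comm (Polynomial.X - 1 : Polynomial ℤ), mul_comm (Polynomial.X - 1 : Polynomial ℤ),
      geom_sum_mul, geom_sum_mul]
    ring
  have hGeval : ∀ n m : ℕ, (G n m).eval 1 = (m : ℤ) - (n : ℤ) := by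
    intro n m
    simp [hGdef, Polynomial.eval_finset_sum]
  have hψs := congrArg ψ hs
  rw [map_mul, h1, h2] at hψs
  have e1 : ∏ w ∈ Pr, ((Polynomial.X : Polynomial ℤ) ^ (a w.2) - Polynomial.X ^ (a w.1))
      = (Polynomial.X - 1 : Polynomial ℤ) ^ Pr.card * ∏ w ∈ Pr, G (a w.1) (a w.2) := by
    rw [← Finset.prod_const, ← Finset.prod_mul_distrib]
    exact Finset.prod_congr rfl (fun w hw => (hG _ _).symm)
  have e2 : ∏ w ∈ Pr, ((Polynomial.X : Polynomial ℤ) ^ ((w.2 : Fin k) : ℕ)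
        - Polynomial.X ^ ((w.1 : Fin k) : ℕ))
      = (Polynomial.X - 1 : Polynomial ℤ) ^ Pr.card * ∏ w ∈ Pr, G (w.1 : ℕ) (w.2 : ℕ) := by
    rw [← Finset.prod_const, ← Finset.prod_mul_distrib]
    exact Finset.prod_congr rfl (fun w hw => (hG _ _).symm)
  rw [e1, e2, mul_assoc] at hψs
  have hXne : (Polynomial.X - 1 : Polynomial ℤ) ^ Pr.card ≠ 0 := by
    apply pow_ne_zero
    rw [← Polynomial.C_1]
    exact Polynomial.X_sub_C_ne_zero 1
  have hcore := mul_left_cancel₀ hXne hψs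
  have heval := congrArg (Polynomial.eval 1) hcore
  rw [Polynomial.eval_mul, Polynomial.eval_prod, Polynomial.eval_prod] at heval
  simp only [hGeval] at heval
  have hψs1 : Polynomial.eval 1 (ψ s) = aeval (fun _ : Fin k => (1:ℤ)) s := by
    have hc := MvPolynomial.comp_aeval_apply (Polynomial.aeval (1:ℤ)) s
      (f := fun j : Fin k => (Polynomial.X : Polynomial ℤ) ^ (j : ℕ))
    rw [show ψ s = aeval (fun j : Fin k => (Polynomial.X : Polynomial ℤ) ^ (j : ℕ)) s from rfl]
    rw [← Polynomial.coe_aeval_eq_eval, hc]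
    simp
  rw [hψs1] at heval
  rw [heval]
  ring

/-- If `q > max_{A,B} |m_{A,B}·p − ∏_{i<j}(a_j−a_i)/∏_{i<j}(j−i)|`, then all
minors of the Fourier matrix `F_p` over `𝔽_{q^{p-1}}` are nonzero. -/
theorem finite_field_all_minors_nonzero_of_large_q
    (p q : ℕ) (hp : p.Prime) (hq : q.Prime) (hpq : p ≠ q) [Fact q.Prime] [Fact p.Prime]
    (hr : orderOf (q : ZMod p) = p - 1)
    (ω : GaloisField q (p - 1)) (hω : IsPrimitiveRoot ω p)
    (hbound : ∀ (k : ℕ) (a b : Fin k → ℕ),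
        StrictMono a → StrictMono b → (∀ i, a i < p) → (∀ i, b i < p) →
        ∀ s : MvPolynomial (Fin k) ℤ,
          Matrix.det (fun i j : Fin k => (MvPolynomial.X j : MvPolynomial (Fin k) ℤ) ^ a i)
            = (∏ w ∈ Finset.univ.filter (fun w : Fin k × Fin k => w.1 < w.2),
                (MvPolynomial.X w.2 - MvPolynomial.X w.1)) * s →
        ∀ m : ℤ,
          m = (∑ μ ∈ s.support,
              s.coeff μ * (if (p : ℤ) ∣ (∑ j : Fin k, (μ j : ℤ) * (b j : ℤ)) then 1 else 0)) →
        ∀ N : ℤ,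
          N * (∏ w ∈ Finset.univ.filter (fun w : Fin k × Fin k => w.1 < w.2),
                ((w.2 : ℤ) - (w.1 : ℤ)))
            = (∏ w ∈ Finset.univ.filter (fun w : Fin k × Fin k => w.1 < w.2),
                ((a w.2 : ℤ) - (a w.1 : ℤ))) →
        (q : ℤ) > |m * p - N|) :
    ∀ (k : ℕ) (a b : Fin k → ℕ),
      StrictMono a → StrictMono b → (∀ i, a i < p) → (∀ i, b i < p) →
      Matrix.det (fun i j : Fin k => ω ^ (a i * b j)) ≠ 0 := by
  intro k a b ha hb hap hbp H0
  classical
  obtain ⟨s, hs⟩ := myexists_schur a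
  set m : ℤ := ∑ μ ∈ s.support,
      s.coeff μ * (if (p : ℤ) ∣ (∑ j : Fin k, (μ j : ℤ) * (b j : ℤ)) then 1 else 0) with hm
  set N : ℤ := aeval (fun _ : Fin k => (1:ℤ)) s with hN
  have hNid := myschur_ones a s hs
  have hqgt := hbound k a b ha hb hap hbp s hs m hm N hNid
  have hωord : orderOf ω = p := hω.eq_orderOf.symm
  have hωmod : ∀ x : ℕ, ω ^ x = ω ^ (x % p) := fun x => by
    have hx := pow_mod_orderOf ω x
    rw [hωord] at hx
    exact hx.symm
  set φv : Fin k → GaloisField q (p - 1) := fun j => ω ^ (b j) with hφv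
  -- the evaluated determinant
  have hdet : (aeval (R := ℤ) φv)
      (Matrix.det fun i j : Fin k => (MvPolynomial.X j : MvPolynomial (Fin k) ℤ) ^ a i)
      = Matrix.det (fun i j : Fin k => ω ^ (a i * b j)) := by
    rw [show (fun i j : Fin k => (MvPolynomial.X j : MvPolynomial (Fin k) ℤ) ^ a i)
        = Matrix.of (fun i j : Fin k => (MvPolynomial.X j : MvPolynomial (Fin k) ℤ) ^ a i) from rfl,
      AlgHom.map_det, AlgHom.mapMatrix_apply]
    congr 1
    apply Matrix.ext
    intro i j
    show (aeval (R := ℤ) φv) ((MvPolynomial.X j : MvPolynomial (Fin k) ℤ) ^ a i) = ω ^ (a i * b j)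
    rw [map_pow, aeval_X]
    show (ω ^ (b j)) ^ (a i) = _
    rw [← pow_mul, mul_comm]
  have hV : (aeval (R := ℤ) φv) (∏ w ∈ Finset.univ.filter (fun w : Fin k × Fin k => w.1 < w.2),
        (MvPolynomial.X w.2 - MvPolynomial.X w.1))
      = ∏ w ∈ Finset.univ.filter (fun w : Fin k × Fin k => w.1 < w.2),
        (ω ^ (b w.2) - ω ^ (b w.1)) := by
    rw [map_prod]
    exact Finset.prod_congr rfl (fun w hw => by simp [φv])
  have hVne : (∏ w ∈ Finset.univ.filter (fun w : Fin k × Fin k => w.1 < w.2),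
      (ω ^ (b w.2) - ω ^ (b w.1))) ≠ 0 := by
    rw [Finset.prod_ne_zero_iff]
    intro w hw hzero
    have hlt : w.1 < w.2 := (Finset.mem_filter.mp hw).2
    rw [sub_eq_zero] at hzero
    exact absurd (hω.pow_inj (hbp w.2) (hbp w.1) hzero) (hb hlt).ne'
  have hφs : (aeval (R := ℤ) φv) s = 0 := by
    have hcongr := congrArg (aeval (R := ℤ) φv) hs
    rw [map_mul, hdet, hV, H0] at hcongr
    rcases mul_eq_zero.mp hcongr.symm with h | h
    · exact absurd h hVne
    · exact h
  -- q generates (ZMod p)ˣ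
  have hqZp : (q : ZMod p) ≠ 0 := by
    rw [Ne, ZMod.natCast_eq_zero_iff]
    intro hdvd
    exact hpq ((Nat.prime_dvd_prime_iff_eq hp hq).mp hdvd)
  have hgen : ∀ c : ℕ, 0 < c → c < p → ∃ n : ℕ, q ^ n ≡ c [MOD p] := by
    intro c hc0 hcp
    have hu : IsUnit (q : ZMod p) := hqZp.isUnit
    have hcz : (c : ZMod p) ≠ 0 := by
      rw [Ne, ZMod.natCast_eq_zero_iff]
      intro hdvd
      exact absurd (Nat.le_of_dvd hc0 hdvd) (not_le.mpr hcp)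
    have hcu : IsUnit (c : ZMod p) := hcz.isUnit
    have horder : orderOf hu.unit = Fintype.card (ZMod p)ˣ := by
      rw [ZMod.card_units p, ← hr, ← orderOf_units, hu.unit_spec]
    have htop : Subgroup.zpowers hu.unit = ⊤ := by
      apply Subgroup.eq_top_of_card_eq
      rw [Nat.card_zpowers, horder, Nat.card_eq_fintype_card]
    have hmem : hcu.unit ∈ Subgroup.zpowers hu.unit := htop ▸ Subgroup.mem_top _
    rw [← mem_powers_iff_mem_zpowers] at hmem
    obtain ⟨n, hn0⟩ := hmem
    have hn : hu.unit ^ n = hcu.unit := hn0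
    refine ⟨n, ?_⟩
    rw [← ZMod.natCast_eq_natCast_iff]
    have hval : ((hu.unit ^ n : (ZMod p)ˣ) : ZMod p) = (c : ZMod p) := by
      rw [hn, hcu.unit_spec]
    rw [Units.val_pow_eq_pow_val, hu.unit_spec] at hval
    rw [Nat.cast_pow, hval]
  -- Frobenius
  have hfrob : ∀ (n : ℕ) (y : Fin k → GaloisField q (p - 1)),
      aeval (fun j => (y j) ^ (q ^ n)) s = (aeval y s) ^ (q ^ n) := by
    intro n
    induction n with
    | zero => intro y; simp
    | succ n ih =>
        intro y
        have h1 : (fun j => (y j) ^ (q ^ (n+1))) = fun j => ((y j) ^ q) ^ (q ^ n) := by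
          funext j
          rw [← pow_mul, ← pow_succ']
        have h2 : aeval (fun j => (y j) ^ q) s = (aeval y s) ^ q := by
          have hc := MvPolynomial.comp_aeval_apply (R := ℤ)
            ((frobenius (GaloisField q (p - 1)) q).toIntAlgHom) s (f := y)
          have e1 : ((frobenius (GaloisField q (p - 1)) q).toIntAlgHom) ((aeval y) s)
              = (aeval y s) ^ q := rfl
          have e2 : (fun i => ((frobenius (GaloisField q (p - 1)) q).toIntAlgHom) (y i))
              = fun j => (y j) ^ q := rfl
          rw [e1, e2] at hc
          exact hc.symm
        rw [h1, ih (fun j => (y j) ^ q), h2, ← pow_mul, ← pow_succ']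
  have hAc : ∀ c : ℕ, 0 < c → c < p →
      aeval (fun j : Fin k => ω ^ (b j * c)) s = 0 := by
    intro c hc0 hcp
    obtain ⟨n, hn⟩ := hgen c hc0 hcp
    have hfun : (fun j : Fin k => ω ^ (b j * c)) = fun j => (ω ^ (b j)) ^ (q ^ n) := by
      funext j
      rw [← pow_mul]
      have hmeq : b j * c ≡ b j * q ^ n [MOD p] := Nat.ModEq.mul_left _ hn.symm
      rw [hωmod (b j * c), hωmod (b j * q ^ n), hmeq]
    rw [hfun, hfrob n φv, hφs, zero_pow (pow_ne_zero n hq.pos.ne')]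
  -- the sum over all c
  set U := ∑ c ∈ Finset.range p, aeval (fun j : Fin k => ω ^ (b j * c)) s with hU
  have hU1 : U = algebraMap ℤ (GaloisField q (p - 1)) N := by
    rw [hU, Finset.sum_eq_single 0]
    · rw [hN]
      have hc := MvPolynomial.comp_aeval_apply (R := ℤ)
        (Algebra.ofId ℤ (GaloisField q (p - 1))) s (f := fun _ : Fin k => (1:ℤ))
      have e2 : (fun _ : Fin k => (Algebra.ofId ℤ (GaloisField q (p - 1))) 1)
          = fun _ : Fin k => (1 : GaloisField q (p - 1)) := by
        funext i
        simp [Algebra.ofId_apply]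
      rw [e2] at hc
      have e3 : (fun j : Fin k => ω ^ (b j * 0)) = fun _ : Fin k => (1 : GaloisField q (p - 1)) := by
        funext j
        rw [Nat.mul_zero, pow_zero]
      rw [e3, ← hc]
      rfl
    · intro c hc hc0
      exact hAc c (Nat.pos_of_ne_zero hc0) (Finset.mem_range.mp hc)
    · intro h
      exact absurd (Finset.mem_range.mpr hp.pos) h
  have hgeom : ∀ t : ℕ, (∑ c ∈ Finset.range p, (ω ^ t) ^ c)
      = if p ∣ t then (p : GaloisField q (p - 1)) else 0 := by
    intro t
    by_cases hdvd : p ∣ t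
    · rw [if_pos hdvd]
      have h1 : ω ^ t = 1 := (hω.pow_eq_one_iff_dvd t).mpr hdvd
      simp [h1]
    · rw [if_neg hdvd]
      have hne1 : ω ^ t ≠ 1 := fun h => hdvd ((hω.pow_eq_one_iff_dvd t).mp h)
      have hppow : (ω ^ t) ^ p = 1 := by
        rw [← pow_mul, mul_comm, pow_mul, hω.pow_eq_one, one_pow]
      have hgs := geom_sum_mul (ω ^ t) p
      rw [hppow, sub_self] at hgs
      rcases mul_eq_zero.mp hgs with h | h
      · exact h
      · exact absurd (sub_eq_zero.mp h) hne1
  have hterm : ∀ c : ℕ, aeval (fun j : Fin k => ω ^ (b j * c)) s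
      = ∑ μ ∈ s.support, (algebraMap ℤ (GaloisField q (p - 1)) (s.coeff μ))
          * (ω ^ (∑ j : Fin k, μ j * b j)) ^ c := by
    intro c
    rw [aeval_def, eval₂_eq']
    apply Finset.sum_congr rfl
    intro μ hμ
    congr 1
    have hfac : ∀ j : Fin k, (ω ^ (b j * c)) ^ (μ j) = ω ^ (μ j * b j * c) := by
      intro j
      rw [← pow_mul]
      congr 1
      ring
    rw [Finset.prod_congr rfl (fun j _ => hfac j), Finset.prod_pow_eq_pow_sum,
      ← Finset.sum_mul, pow_mul]
  have hU2 : U = algebraMap ℤ (GaloisField q (p - 1)) (m * p) := by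
    rw [hU]
    rw [Finset.sum_congr rfl (fun c _ => hterm c), Finset.sum_comm]
    have : ∀ μ ∈ s.support,
        (∑ c ∈ Finset.range p, (algebraMap ℤ (GaloisField q (p - 1)) (s.coeff μ))
          * (ω ^ (∑ j : Fin k, μ j * b j)) ^ c)
        = algebraMap ℤ (GaloisField q (p - 1))
            (s.coeff μ * (if (p : ℤ) ∣ (∑ j : Fin k, (μ j : ℤ) * (b j : ℤ)) then 1 else 0) * p) := by
      intro μ hμ
      rw [← Finset.mul_sum, hgeom]
      have hdvdiff : ((p:ℤ) ∣ (∑ j : Fin k, (μ j : ℤ) * (b j : ℤ)))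
          ↔ (p ∣ ∑ j : Fin k, μ j * b j) := by
        rw [show (∑ j : Fin k, (μ j : ℤ) * (b j : ℤ))
            = ((∑ j : Fin k, μ j * b j : ℕ) : ℤ) by push_cast; ring]
        exact Int.natCast_dvd_natCast
      by_cases hd : p ∣ ∑ j : Fin k, μ j * b j
      · rw [if_pos hd, if_pos (hdvdiff.mpr hd)]
        push_cast
        ring
      · rw [if_neg hd, if_neg (fun hcon => hd (hdvdiff.mp hcon))]
        push_cast
        ring
    rw [Finset.sum_congr rfl this, ← map_sum]
    congr 1
    rw [hm, Finset.sum_mul]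
  have hcast : algebraMap ℤ (GaloisField q (p - 1)) (m * p - N) = 0 := by
    rw [map_sub, ← hU1, ← hU2, sub_self]
  have hqdvd : (q : ℤ) ∣ (m * p - N) := by
    rw [algebraMap_int_eq] at hcast
    exact (CharP.intCast_eq_zero_iff (GaloisField q (p - 1)) q _).mp hcast
  have hzero : m * p - N = 0 := Int.eq_zero_of_abs_lt_dvd hqdvd hqgt
  have hpN : (p : ℤ) ∣ N := ⟨m, by linarith⟩
  have hpP : (p : ℤ) ∣ ∏ w ∈ Finset.univ.filter (fun w : Fin k × Fin k => w.1 < w.2),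
      ((a w.2 : ℤ) - (a w.1 : ℤ)) := by
    rw [← hNid]
    exact Dvd.dvd.mul_right hpN _
  obtain ⟨w, hwmem, hwdvd⟩ := (Prime.dvd_finset_prod_iff (Nat.prime_iff_prime_int.1 hp) _).mp hpP
  have hlt : w.1 < w.2 := (Finset.mem_filter.mp hwmem).2
  have hpos : (0 : ℤ) < (a w.2 : ℤ) - (a w.1 : ℤ) := by
    have := ha hlt
    omega
  have hle := Int.le_of_dvd hpos hwdvd
  have hub : (a w.2 : ℤ) < p := by exact_mod_cast hap w.2
  omega
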